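/- Let Ā be a minimal graph, i.e. a finite connected graph that is a minimal covering quotient of its own universal covering tree. Then every automorphism of Ā is an edge automorphism: its vertex map is the identity on the vertex set of Ā. -/

import Mathlib

/-- A rooted directed multigraph. -/
structure RDGraph where
  V : Type
  E : Type
  s : E → V
  t : E → V
  root : V

namespace RDGraph

/-- `l` is a path: consecutive edges are composable. -/
def IsPath (A : RDGraph) (l : List A.E) : Prop :=
  l.Chain' (fun e f => A.t e = A.s f)

/-- `l` is a path starting at the vertex `q`. -/
def PathFrom (A : RDGraph) (q : A.V) (l : List A.E) : Prop :=
  A.IsPath l ∧ ∀ e ∈ l.head?, A.s e = q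

/-- The target of the path `l` started at `q` (equal to `q` for the empty path). -/
def pathTarget (A : RDGraph) (q : A.V) (l : List A.E) : A.V :=
  l.foldl (fun _ e => A.t e) q

@[simp] lemma pathTarget_nil (A : RDGraph) (q : A.V) : A.pathTarget q [] = q := rfl

@[simp] lemma pathTarget_cons (A : RDGraph) (q : A.V) (a : A.E) (l : List A.E) :
    A.pathTarget q (a :: l) = A.pathTarget (A.t a) l := rfl

lemma pathTarget_append (A : RDGraph) (q : A.V) (l l' : List A.E) :
    A.pathTarget q (l ++ l') = A.pathTarget (A.pathTarget q l) l' := by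
  simp [pathTarget]

@[simp] lemma pathTarget_append_single (A : RDGraph) (q : A.V) (l : List A.E) (e : A.E) :
    A.pathTarget q (l ++ [e]) = A.t e := by
  rw [pathTarget_append]; rfl

lemma pathFrom_nil (A : RDGraph) (q : A.V) : A.PathFrom q [] :=
  ⟨List.isChain_nil, by simp⟩

lemma pathTarget_getLast {A : RDGraph} {q : A.V} {l : List A.E} {x : A.E}
    (hx : x ∈ l.getLast?) : A.pathTarget q l = A.t x := by
  induction l generalizing q with
  | nil => simp at hx
  | cons a l ih =>
    cases l with
    | nil => simp at hx; subst hx; rfl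
    | cons b l =>
      rw [List.getLast?_cons_cons] at hx
      simpa using ih (q := A.t a) hx

lemma pathFrom_append_single {A : RDGraph} {q : A.V} {l : List A.E} {e : A.E}
    (h : A.PathFrom q l) (he : A.s e = A.pathTarget q l) :
    A.PathFrom q (l ++ [e]) := by
  constructor
  · apply List.isChain_append.mpr
    refine ⟨h.1, List.isChain_singleton _, ?_⟩
    intro x hx y hy
    simp at hy
    subst hy
    rw [he]
    exact (pathTarget_getLast hx).symm
  · intro f hf
    cases l with
    | nil =>
      simp at hf
      subst hf
      simpa using he
    | cons a l =>
      simp at hf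
      subst hf
      exact h.2 a (by simp)

/-- `w` is reachable from `q` by an oriented path. -/
def Reach (A : RDGraph) (q w : A.V) : Prop :=
  ∃ l, A.PathFrom q l ∧ A.pathTarget q l = w

lemma reach_self (A : RDGraph) (q : A.V) : A.Reach q q :=
  ⟨[], A.pathFrom_nil q, rfl⟩

lemma reach_target {A : RDGraph} {q : A.V} {e : A.E} (h : A.Reach q (A.s e)) :
    A.Reach q (A.t e) := by
  obtain ⟨l, hl, ht⟩ := h
  exact ⟨l ++ [e], pathFrom_append_single hl ht.symm, by simp⟩

/-- A graph is connected (as a rooted directed graph) if every vertex is reachable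
from the root. -/
def Connected (A : RDGraph) : Prop := ∀ w : A.V, A.Reach A.root w

/-- A graph is a tree if the target map from paths emanating from the root to
vertices is a bijection. -/
def IsTree (A : RDGraph) : Prop :=
  Function.Bijective
    (fun l : {l : List A.E // A.PathFrom A.root l} => A.pathTarget A.root l.1)

/-- A graph is locally finite if every vertex has finitely many outgoing edges. -/
def LocallyFinite (A : RDGraph) : Prop := ∀ q : A.V, Finite {e : A.E // A.s e = q}

/-- Adjacency: there is an edge from `v` to `w`. -/
def Adj (A : RDGraph) (v w : A.V) : Prop := ∃ e, A.s e = v ∧ A.t e = w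

/-- The induced rooted subgraph on all vertices reachable from `q` (the "cone" at `q`). -/
def subgraph (A : RDGraph) (q : A.V) : RDGraph where
  V := {w // A.Reach q w}
  E := {e // A.Reach q (A.s e)}
  s := fun e => ⟨A.s e.1, e.2⟩
  t := fun e => ⟨A.t e.1, reach_target e.2⟩
  root := ⟨q, A.reach_self q⟩

/-- The truncation of the cone at `v` to vertices at distance at most `d` from `v`. -/
def trunc (A : RDGraph) (v : A.V) (d : ℕ) : RDGraph where
  V := {w // ∃ l, A.PathFrom v l ∧ A.pathTarget v l = w ∧ l.length ≤ d}
  E := {e // ∃ l, A.PathFrom v l ∧ A.pathTarget v l = A.s e ∧ l.length < d}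
  s := fun e => ⟨A.s e.1, e.2.imp fun _ h => ⟨h.1, h.2.1, h.2.2.le⟩⟩
  t := fun e => ⟨A.t e.1, by
    obtain ⟨l, h1, h2, h3⟩ := e.2
    exact ⟨l ++ [e.1], pathFrom_append_single h1 h2.symm, by simp,
      by simp only [List.length_append, List.length_singleton]; omega⟩⟩
  root := ⟨v, [], A.pathFrom_nil v, rfl, Nat.zero_le d⟩

/-- The universal covering tree of `A`: vertices are the paths emanating from the root. -/
def cover (A : RDGraph) : RDGraph where
  V := {l : List A.E // A.PathFrom A.root l}
  E := {x : {l : List A.E // A.PathFrom A.root l} × A.E //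
          A.s x.2 = A.pathTarget A.root x.1.1}
  s := fun x => x.1.1
  t := fun x => ⟨x.1.1.1 ++ [x.1.2], pathFrom_append_single x.1.1.2 x.2⟩
  root := ⟨[], A.pathFrom_nil _⟩

end RDGraph

/-- A morphism of rooted directed multigraphs. -/
structure GraphHom (A B : RDGraph) where
  v : A.V → B.V
  e : A.E → B.E
  root_eq : v A.root = B.root
  s_eq : ∀ x, B.s (e x) = v (A.s x)
  t_eq : ∀ x, B.t (e x) = v (A.t x)

namespace GraphHom

variable {A B : RDGraph}

/-- The unique path lifting property. -/
def UPLP (p : GraphHom A B) : Prop :=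
  ∀ (q : A.V) (l' : List B.E), B.PathFrom (p.v q) l' →
    ∃! l : List A.E, A.PathFrom q l ∧ l.map p.e = l'

/-- A covering morphism: surjective on vertices, with the unique path lifting property. -/
def IsCovering (p : GraphHom A B) : Prop := Function.Surjective p.v ∧ p.UPLP

/-- An isomorphism of graphs: bijective on vertices and on edges. -/
def IsIso (p : GraphHom A B) : Prop := Function.Bijective p.v ∧ Function.Bijective p.e

/-- The restriction of the edge map to the edges emanating from `q`. -/
def outMap (p : GraphHom A B) (q : A.V) :
    {e : A.E // A.s e = q} → {e' : B.E // B.s e' = p.v q} :=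
  fun e => ⟨p.e e.1, by rw [p.s_eq, e.2]⟩

lemma isPath_map (p : GraphHom A B) {l : List A.E} (h : A.IsPath l) :
    B.IsPath (l.map p.e) := by
  rw [RDGraph.IsPath]
  show List.IsChain _ (l.map p.e)
  rw [List.isChain_map]
  exact List.IsChain.imp (fun a b hab => by rw [p.t_eq, p.s_eq, hab]) h

lemma pathFrom_map (p : GraphHom A B) {q : A.V} {l : List A.E} (h : A.PathFrom q l) :
    B.PathFrom (p.v q) (l.map p.e) := by
  refine ⟨p.isPath_map h.1, ?_⟩
  intro f hf
  cases l with
  | nil => simp at hf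
  | cons a l =>
    simp at hf
    subst hf
    rw [p.s_eq, h.2 a (by simp)]

lemma pathTarget_map (p : GraphHom A B) (q : A.V) (l : List A.E) :
    B.pathTarget (p.v q) (l.map p.e) = p.v (A.pathTarget q l) := by
  induction l generalizing q with
  | nil => rfl
  | cons a l ih =>
    show B.pathTarget (B.t (p.e a)) (l.map p.e) = _
    rw [p.t_eq]
    exact ih (A.t a)

lemma reach_map (p : GraphHom A B) {q w : A.V} (h : A.Reach q w) :
    B.Reach (p.v q) (p.v w) := by
  obtain ⟨l, hl, ht⟩ := h
  exact ⟨l.map p.e, p.pathFrom_map hl, by rw [p.pathTarget_map, ht]⟩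

end GraphHom

/-- Two graphs are isomorphic. -/
def RDGraph.Iso (A B : RDGraph) : Prop := ∃ p : GraphHom A B, p.IsIso

/-- The universal covering morphism from the universal covering tree of `A` to `A`. -/
def RDGraph.uCover (A : RDGraph) : GraphHom A.cover A where
  v := fun l => A.pathTarget A.root l.1
  e := fun x => x.1.2
  root_eq := rfl
  s_eq := fun x => x.2
  t_eq := fun x => by
    show A.t x.1.2 = A.pathTarget A.root (x.1.1.1 ++ [x.1.2])
    simp

/-- The morphism induced between universal covering trees by a morphism of graphs. -/
def GraphHom.coverMap {A B : RDGraph} (p : GraphHom A B) : GraphHom A.cover B.cover where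
  v := fun l => ⟨l.1.map p.e, by have := p.pathFrom_map l.2; rwa [p.root_eq] at this⟩
  e := fun x =>
    ⟨(⟨x.1.1.1.map p.e, by have := p.pathFrom_map x.1.1.2; rwa [p.root_eq] at this⟩,
      p.e x.1.2), by
        show B.s (p.e x.1.2) = B.pathTarget B.root (x.1.1.1.map p.e)
        rw [p.s_eq, x.2, ← p.root_eq, p.pathTarget_map]⟩
  root_eq := Subtype.ext rfl
  s_eq := fun _ => rfl
  t_eq := fun x => by
    apply Subtype.ext
    simp [RDGraph.cover]

/-- `A` is a covering quotient of `T`. -/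
def IsCovQuotient (T A : RDGraph) : Prop := ∃ p : GraphHom T A, p.IsCovering

/-- `A` is a minimal covering quotient of `T`: a covering quotient with the minimal
number of vertices among all covering quotients of `T`. -/
def IsMinCovQuotient (T A : RDGraph) : Prop :=
  IsCovQuotient T A ∧
    ∀ B : RDGraph, IsCovQuotient T B → Cardinal.mk A.V ≤ Cardinal.mk B.V

/-- `T` has finitely many cone types. -/
def FinManyCones (T : RDGraph) : Prop :=
  ∃ S : Set T.V, S.Finite ∧ ∀ v : T.V, ∃ w ∈ S, RDGraph.Iso (T.subgraph v) (T.subgraph w)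

/-- A self-similar tree: a locally finite tree with finitely many cone types. -/
def SelfSimilarTree (T : RDGraph) : Prop := T.IsTree ∧ T.LocallyFinite ∧ FinManyCones T

namespace RDGraph

/-- The automorphism group of a graph, realized as the group of root-preserving,
adjacency-preserving permutations of the vertex set (for trees this is the same as the
automorphism group in the sense of graph morphisms, since in a tree an edge is determined
by its endpoints). -/
def autGroup (T : RDGraph) : Subgroup (Equiv.Perm T.V) where
  carrier := {g | g T.root = T.root ∧ ∀ v w, T.Adj v w ↔ T.Adj (g v) (g w)}
  one_mem' := ⟨rfl, fun _ _ => Iff.rfl⟩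
  mul_mem' := by
    rintro a b ⟨ha1, ha2⟩ ⟨hb1, hb2⟩
    refine ⟨?_, fun v w => ?_⟩
    · show a (b T.root) = T.root
      rw [hb1, ha1]
    · exact (hb2 v w).trans (ha2 (b v) (b w))
  inv_mem' := by
    rintro a ⟨ha1, ha2⟩
    refine ⟨?_, fun v w => ?_⟩
    · show a.symm T.root = T.root
      rw [Equiv.symm_apply_eq]
      exact ha1.symm
    · have h := ha2 (a⁻¹ v) (a⁻¹ w)
      simpa using h.symm

/-- The subgroup of permutations of the vertices fixing every vertex outside
of the cone at `v`. -/
def fixOutside (T : RDGraph) (v : T.V) : Subgroup (Equiv.Perm T.V) where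
  carrier := {g | ∀ w, ¬ T.Reach v w → g w = w}
  one_mem' := fun _ _ => rfl
  mul_mem' := by
    intro a b ha hb w hw
    show a (b w) = w
    rw [hb w hw, ha w hw]
  inv_mem' := by
    intro a ha w hw
    show a.symm w = w
    rw [Equiv.symm_apply_eq]
    exact (ha w hw).symm

/-- The rigid stabilizer of the vertex `v`: automorphisms fixing every vertex
outside the subtree spanned by `v` and its descendants. -/
def rist (T : RDGraph) (v : T.V) : Subgroup (Equiv.Perm T.V) :=
  T.autGroup ⊓ T.fixOutside v

/-- The set of vertices at distance `n` from the root. -/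
def level (T : RDGraph) (n : ℕ) : Set T.V :=
  {v | ∃ l : List T.E, T.PathFrom T.root l ∧ T.pathTarget T.root l = v ∧ l.length = n}

/-- The `n`-th rigid level stabilizer: the subgroup generated by the rigid stabilizers
of the vertices at distance `n` from the root. -/
def ristLevel (T : RDGraph) (n : ℕ) : Subgroup (Equiv.Perm T.V) :=
  ⨆ v ∈ T.level n, T.rist v

/-- The `n`-th rigid level stabilizer, as a subgroup of the automorphism group. -/
def ristIn (T : RDGraph) (n : ℕ) : Subgroup ↥T.autGroup :=
  (T.ristLevel n).comap T.autGroup.subtype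

end RDGraph

/-- A recurrent double edge: a pair of distinct parallel edges such that there is an
oriented loop which contains one of them, or from which their common source can be
reached. -/
def HasRecDoubleEdge (A : RDGraph) : Prop :=
  ∃ e₁ e₂ : A.E, e₁ ≠ e₂ ∧ A.s e₁ = A.s e₂ ∧ A.t e₁ = A.t e₂ ∧
    ((∃ (q : A.V) (l : List A.E),
        A.PathFrom q l ∧ l ≠ [] ∧ A.pathTarget q l = q ∧ (e₁ ∈ l ∨ e₂ ∈ l)) ∨
     (∃ (q : A.V) (l : List A.E),
        A.PathFrom q l ∧ l ≠ [] ∧ A.pathTarget q l = q ∧ A.Reach q (A.s e₁)))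

/-- A deterministic finite automaton over the alphabet `A`, with a partial transition
function, a single initial state, and all states accepting. -/
structure PDFA (A : Type) where
  Q : Type
  finQ : Finite Q
  neQ : Nonempty Q
  δ : Q → A → Option Q
  init : Q

namespace PDFA

variable {A : Type} (M : PDFA A)

/-- Running the automaton from state `q` on a word; `none` if it gets stuck. -/
def run : M.Q → List A → Option M.Q
  | q, [] => some q
  | q, a :: w => (M.δ q a).bind fun q' => run q' w

/-- The regular language accepted by `M`. -/
def Lang : Set (List A) := {w | (M.run M.init w).isSome}

lemma run_append (q : M.Q) (u w : List A) :
    M.run q (u ++ w) = (M.run q u).bind fun q' => M.run q' w := by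
  induction u generalizing q with
  | nil => simp [run]
  | cons a u ih =>
    simp only [List.cons_append, run]
    cases M.δ q a with
    | none => simp
    | some q' => simp [ih]

lemma isSome_of_append {q : M.Q} {u w : List A}
    (h : (M.run q (u ++ w)).isSome) : (M.run q u).isSome := by
  rw [run_append] at h
  cases hu : M.run q u with
  | none => rw [hu] at h; simp at h
  | some q' => simp

/-- The path language tree of `M`: the tree whose vertices are the words of the
language of `M`, with an edge from `w` to `w ++ [a]` whenever both belong to the
language. -/
def pathTree : RDGraph where
  V := {w : List A // (M.run M.init w).isSome}
  E := {x : List A × A // (M.run M.init (x.1 ++ [x.2])).isSome}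
  s := fun x => ⟨x.1.1, M.isSome_of_append x.2⟩
  t := fun x => ⟨x.1.1 ++ [x.1.2], x.2⟩
  root := ⟨[], by simp [run]⟩

/-- The underlying rooted directed multigraph of the automaton `M`. -/
def underlying : RDGraph where
  V := M.Q
  E := {x : M.Q × A // (M.δ x.1 x.2).isSome}
  s := fun x => x.1.1
  t := fun x => (M.δ x.1.1 x.1.2).get x.2
  root := M.init

/-- `M` is geometrically minimal: it has the minimal number of states among all DFAs
(over arbitrary finite nonempty alphabets) whose path language trees are isomorphic,
as unlabelled rooted trees, to the path language tree of `M`. -/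
def GeomMinimal : Prop :=
  ∀ (B : Type), Finite B → Nonempty B → ∀ N : PDFA B,
    RDGraph.Iso M.pathTree N.pathTree → Nat.card M.Q ≤ Nat.card N.Q

/-- The state reached after reading the word `w` of the language. -/
def qstate (w : List A) (h : (M.run M.init w).isSome) : M.Q :=
  (M.run M.init w).get h

/-- The group of admissible permutations at the state `q`: permutations `τ` of the
alphabet fixing the letters outside `Σ(q)` and satisfying `δ(q, τ a) = δ(q, a)`. -/
def SymQ (q : M.Q) : Subgroup (Equiv.Perm A) where
  carrier := {τ | ∀ a, M.δ q (τ a) = M.δ q a ∧ (M.δ q a = none → τ a = a)}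
  one_mem' := fun _ => ⟨rfl, fun _ => rfl⟩
  mul_mem' := by
    intro τ₁ τ₂ h1 h2 a
    constructor
    · show M.δ q (τ₁ (τ₂ a)) = M.δ q a
      rw [(h1 (τ₂ a)).1, (h2 a).1]
    · intro hn
      show τ₁ (τ₂ a) = a
      rw [(h2 a).2 hn, (h1 a).2 hn]
  inv_mem' := by
    intro τ h a
    have h1 := (h (τ.symm a)).1
    rw [Equiv.apply_symm_apply] at h1
    constructor
    · show M.δ q (τ.symm a) = M.δ q a
      exact h1.symm
    · intro hn
      have h2 := (h (τ.symm a)).2 (h1.symm.trans hn)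
      rw [Equiv.apply_symm_apply] at h2
      show τ.symm a = a
      exact h2.symm

end PDFA

/-- Extending a portrait to a map on words (the first argument is the accumulated
prefix): the `i`-th letter of the image word is the image of the `i`-th letter under
the local injection at the prefix of length `i - 1`. -/
def portraitExtend {A : Type} (σ : List A → A → A) : List A → List A → List A
  | _, [] => []
  | pre, a :: w => σ pre a :: portraitExtend σ (pre ++ [a]) w

namespace Stmt11Aux

lemma pathFrom_tail {A : RDGraph} {q : A.V} {a : A.E} {l : List A.E}
    (h : A.PathFrom q (a :: l)) : A.PathFrom (A.t a) l := by
  obtain ⟨h1, _⟩ := h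
  rw [RDGraph.IsPath] at h1
  change List.IsChain _ (a :: l) at h1
  rw [List.isChain_cons] at h1
  exact ⟨h1.2, fun e he => (h1.1 e he).symm⟩

/-- Composition of graph morphisms. -/
def comp {A B C : RDGraph} (q : GraphHom B C) (p : GraphHom A B) : GraphHom A C where
  v := q.v ∘ p.v
  e := q.e ∘ p.e
  root_eq := by show q.v (p.v A.root) = C.root; rw [p.root_eq, q.root_eq]
  s_eq := fun x => by show C.s (q.e (p.e x)) = q.v (p.v (A.s x)); rw [q.s_eq, p.s_eq]
  t_eq := fun x => by show C.t (q.e (p.e x)) = q.v (p.v (A.t x)); rw [q.t_eq, p.t_eq]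

/-- Composition of covering morphisms is a covering morphism. -/
lemma comp_isCovering {A B C : RDGraph} {q : GraphHom B C} {p : GraphHom A B}
    (hq : q.IsCovering) (hp : p.IsCovering) : (comp q p).IsCovering := by
  constructor
  · exact hq.1.comp hp.1
  · intro a l' hl'
    obtain ⟨m, ⟨hm, hmap⟩, hmuniq⟩ := hq.2 (p.v a) l' hl'
    obtain ⟨l, ⟨hl, hlm⟩, hluniq⟩ := hp.2 a m hm
    refine ⟨l, ⟨hl, ?_⟩, ?_⟩
    · show l.map (q.e ∘ p.e) = l'
      rw [← List.map_map, hlm, hmap]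
    · rintro l₂ ⟨hl₂, hl₂map⟩
      have hm2 : l₂.map p.e = m := by
        refine hmuniq _ ⟨p.pathFrom_map hl₂, ?_⟩
        rw [List.map_map]; exact hl₂map
      exact hluniq _ ⟨hl₂, hm2⟩

/-- Unique lifting of single edges implies the unique path lifting property. -/
lemma uplp_of_edgeLift {A B : RDGraph} (p : GraphHom A B)
    (h : ∀ (a : A.V) (e' : B.E), B.s e' = p.v a → ∃! f : A.E, A.s f = a ∧ p.e f = e') :
    p.UPLP := by
  intro a l'
  induction l' generalizing a with
  | nil =>
    intro _
    refine ⟨[], ⟨A.pathFrom_nil a, rfl⟩, ?_⟩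
    rintro l ⟨-, hl⟩
    simpa using hl
  | cons e' l' ih =>
    intro hpl
    have hse : B.s e' = p.v a := hpl.2 e' rfl
    obtain ⟨f, ⟨hsf, hef⟩, hfuniq⟩ := h a e' hse
    have htail : B.PathFrom (B.t e') l' := pathFrom_tail hpl
    have ht : B.t e' = p.v (A.t f) := by rw [← hef, p.t_eq]
    rw [ht] at htail
    obtain ⟨l, ⟨hl, hlmap⟩, hluniq⟩ := ih (A.t f) htail
    refine ⟨f :: l, ⟨⟨?_, ?_⟩, ?_⟩, ?_⟩
    · rw [RDGraph.IsPath]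
      change List.IsChain _ (f :: l)
      rw [List.isChain_cons]
      exact ⟨fun b hb => (hl.2 b hb).symm, hl.1⟩
    · intro e he
      simp only [List.head?_cons, Option.mem_def, Option.some.injEq] at he
      subst he; exact hsf
    · simp [hef, hlmap]
    · rintro (_ | ⟨f₂, l₂⟩) ⟨hl₂, hl₂map⟩
      · simp at hl₂map
      · simp only [List.map_cons, List.cons.injEq] at hl₂map
        obtain ⟨hf₂, hl₂map⟩ := hl₂map
        have hf₂s : A.s f₂ = a := hl₂.2 f₂ rfl
        have h1 : f₂ = f := hfuniq f₂ ⟨hf₂s, hf₂⟩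
        subst h1
        have h2 : l₂ = l := hluniq l₂ ⟨pathFrom_tail hl₂, hl₂map⟩
        rw [h2]

section Quot

variable (A : RDGraph) (g : GraphHom A A) (N : ℕ)

/-- The orbit relation of the vertex map of `g`. -/
def grel : A.V → A.V → Prop := fun v w => ∃ k : ℕ, g.v^[k] v = w

lemma grel_equiv (hN : 0 < N) (hNv : g.v^[N] = id) : Equivalence (grel A g) := by
  refine ⟨fun v => ⟨0, rfl⟩, ?_, ?_⟩
  · rintro v w ⟨k, hk⟩
    refine ⟨N * (k + 1) - k, ?_⟩
    have hle : k ≤ N * (k + 1) := by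
      calc k ≤ k + 1 := Nat.le_succ k
        _ ≤ N * (k + 1) := Nat.le_mul_of_pos_left _ hN
    rw [← hk, ← Function.iterate_add_apply, Nat.sub_add_cancel hle,
      Function.iterate_mul, hNv, Function.iterate_id, id]
  · rintro u v w ⟨k, hk⟩ ⟨m, hm⟩
    exact ⟨m + k, by rw [Function.iterate_add_apply, hk, hm]⟩

variable (hN : 0 < N) (hNv : g.v^[N] = id)

/-- The orbit setoid. -/
def gst : Setoid A.V := ⟨grel A g, grel_equiv A g N hN hNv⟩

/-- Choice of the power of `g` moving a vertex to its orbit representative. -/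
noncomputable def kf (w : A.V) : ℕ :=
  (Quotient.exact (Quotient.out_eq (Quotient.mk (gst A g N hN hNv) w)).symm).choose

lemma kf_spec (w : A.V) :
    g.v^[kf A g N hN hNv w] w = (Quotient.mk (gst A g N hN hNv) w).out :=
  (Quotient.exact (Quotient.out_eq (Quotient.mk (gst A g N hN hNv) w)).symm).choose_spec

lemma s_iter (n : ℕ) (e : A.E) : A.s (g.e^[n] e) = g.v^[n] (A.s e) := by
  induction n with
  | zero => rfl
  | succ n ih =>
    rw [Function.iterate_succ_apply', Function.iterate_succ_apply', g.s_eq, ih]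

lemma t_iter (n : ℕ) (e : A.E) : A.t (g.e^[n] e) = g.v^[n] (A.t e) := by
  induction n with
  | zero => rfl
  | succ n ih =>
    rw [Function.iterate_succ_apply', Function.iterate_succ_apply', g.t_eq, ih]

/-- The quotient graph: vertices are orbits, edges are the edges whose source is an
orbit representative. -/
noncomputable def Bgr : RDGraph where
  V := Quotient (gst A g N hN hNv)
  E := {e : A.E // A.s e = (Quotient.mk (gst A g N hN hNv) (A.s e)).out}
  s := fun e => Quotient.mk (gst A g N hN hNv) (A.s e.1)
  t := fun e => Quotient.mk (gst A g N hN hNv) (A.t e.1)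
  root := Quotient.mk (gst A g N hN hNv) A.root

/-- The quotient morphism. -/
noncomputable def proj : GraphHom A (Bgr A g N hN hNv) where
  v := fun w => Quotient.mk (gst A g N hN hNv) w
  e := fun x => ⟨g.e^[kf A g N hN hNv (A.s x)] x, by
    have h1 : A.s (g.e^[kf A g N hN hNv (A.s x)] x)
        = (Quotient.mk (gst A g N hN hNv) (A.s x)).out := by
      rw [s_iter, kf_spec]
    rw [h1, Quotient.out_eq]⟩
  root_eq := rfl
  s_eq := fun x => by
    show Quotient.mk (gst A g N hN hNv) (A.s (g.e^[kf A g N hN hNv (A.s x)] x))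
      = Quotient.mk (gst A g N hN hNv) (A.s x)
    rw [s_iter]
    exact (Quotient.sound (⟨_, rfl⟩ : grel A g (A.s x)
      (g.v^[kf A g N hN hNv (A.s x)] (A.s x)))).symm
  t_eq := fun x => by
    show Quotient.mk (gst A g N hN hNv) (A.t (g.e^[kf A g N hN hNv (A.s x)] x))
      = Quotient.mk (gst A g N hN hNv) (A.t x)
    rw [t_iter]
    exact (Quotient.sound (⟨_, rfl⟩ : grel A g (A.t x)
      (g.v^[kf A g N hN hNv (A.s x)] (A.t x)))).symm

lemma proj_isCovering (hNe : g.e^[N] = id) : (proj A g N hN hNv).IsCovering := by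
  constructor
  · exact fun q => ⟨q.out, Quotient.out_eq q⟩
  · apply uplp_of_edgeLift
    intro a e' hse
    obtain ⟨f', hf'⟩ := e'
    have hcl : Quotient.mk (gst A g N hN hNv) (A.s f')
        = Quotient.mk (gst A g N hN hNv) a := hse
    have hsrc : A.s f' = g.v^[kf A g N hN hNv a] a := by
      rw [hf', hcl, ← kf_spec A g N hN hNv a]
    set k := kf A g N hN hNv a with hk
    set j := N * (k + 1) - k with hj
    have hle : k ≤ N * (k + 1) := by
      calc k ≤ k + 1 := Nat.le_succ k
        _ ≤ N * (k + 1) := Nat.le_mul_of_pos_left _ hN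
    have hjk : j + k = N * (k + 1) := by omega
    have hvjk : g.v^[j + k] = id := by
      rw [hjk, Function.iterate_mul, hNv, Function.iterate_id]
    have hejk : ∀ x : A.E, g.e^[k] (g.e^[j] x) = x := by
      intro x
      rw [← Function.iterate_add_apply, Nat.add_comm k j, hjk,
        Function.iterate_mul, hNe, Function.iterate_id, id]
    have hsf : A.s (g.e^[j] f') = a := by
      rw [s_iter, hsrc, ← Function.iterate_add_apply, hvjk, id]
    refine ⟨g.e^[j] f', ⟨hsf, ?_⟩, ?_⟩
    · apply Subtype.ext
      show g.e^[kf A g N hN hNv (A.s (g.e^[j] f'))] (g.e^[j] f') = f'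
      rw [hsf, ← hk]
      exact hejk f'
    · rintro f₂ ⟨hsf₂, hef₂⟩
      have h2 : g.e^[kf A g N hN hNv (A.s f₂)] f₂ = f' := congrArg Subtype.val hef₂
      rw [hsf₂, ← hk] at h2
      rw [← h2]
      have : g.e^[j] (g.e^[k] f₂) = g.e^[j + k] f₂ :=
        (Function.iterate_add_apply _ j k f₂).symm
      rw [this, Nat.add_comm j k, Function.iterate_add_apply, hejk]

end Quot

end Stmt11Aux

/-- Let `Ā` be a minimal graph, i.e. a finite connected graph which
is a minimal covering quotient of its own universal covering tree. Then every
automorphism of `Ā` is an edge automorphism: it is the identity on vertices. -/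
theorem stmt11 (Abar : RDGraph) (hfinV : Finite Abar.V) (hfinE : Finite Abar.E)
    (hconn : Abar.Connected) (hmin : IsMinCovQuotient Abar.cover Abar) :
    ∀ g : GraphHom Abar Abar, g.IsIso → g.v = id := by
  classical
  intro g hg
  by_contra hne
  rw [funext_iff] at hne
  push_neg at hne
  obtain ⟨v₀, hv₀⟩ := hne
  -- find a common period `N` for the vertex and edge maps of `g`
  set σ : Equiv.Perm Abar.V := Equiv.ofBijective g.v hg.1 with hσ
  set τ : Equiv.Perm Abar.E := Equiv.ofBijective g.e hg.2 with hτ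
  set N : ℕ := orderOf σ * orderOf τ with hNdef
  have hN : 0 < N := Nat.mul_pos (orderOf_pos σ) (orderOf_pos τ)
  have hNv : g.v^[N] = id := by
    have : σ ^ N = 1 := by rw [hNdef, pow_mul, pow_orderOf_eq_one, one_pow]
    have h2 : (⇑σ)^[N] = ⇑(σ ^ N) := Equiv.Perm.iterate_eq_pow σ N
    rw [this] at h2
    simpa [hσ] using h2
  have hNe : g.e^[N] = id := by
    have : τ ^ N = 1 := by rw [hNdef, mul_comm, pow_mul, pow_orderOf_eq_one, one_pow]
    have h2 : (⇑τ)^[N] = ⇑(τ ^ N) := Equiv.Perm.iterate_eq_pow τ N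
    rw [this] at h2
    simpa [hτ] using h2
  -- the quotient graph is a covering quotient of the universal cover
  obtain ⟨p, hp⟩ := hmin.1
  have hBcov : IsCovQuotient Abar.cover (Stmt11Aux.Bgr Abar g N hN hNv) :=
    ⟨Stmt11Aux.comp (Stmt11Aux.proj Abar g N hN hNv) p,
      Stmt11Aux.comp_isCovering (Stmt11Aux.proj_isCovering Abar g N hN hNv hNe) hp⟩
  have hle := hmin.2 _ hBcov
  -- but it has strictly fewer vertices
  haveI : Fintype Abar.V := Fintype.ofFinite _
  haveI : Fintype (Quotient (Stmt11Aux.gst Abar g N hN hNv)) := Fintype.ofFinite _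
  have hsurj : Function.Surjective
      (Quotient.mk (Stmt11Aux.gst Abar g N hN hNv)) :=
    fun q => ⟨q.out, Quotient.out_eq q⟩
  have hninj : ¬ Function.Injective
      (Quotient.mk (Stmt11Aux.gst Abar g N hN hNv)) := by
    intro hinj
    apply hv₀
    have hcl : Quotient.mk (Stmt11Aux.gst Abar g N hN hNv) v₀
        = Quotient.mk (Stmt11Aux.gst Abar g N hN hNv) (g.v v₀) :=
      Quotient.sound ⟨1, rfl⟩
    exact (hinj hcl).symm
  have hlt : Fintype.card (Quotient (Stmt11Aux.gst Abar g N hN hNv))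
      < Fintype.card Abar.V :=
    Fintype.card_lt_of_surjective_not_injective _ hsurj hninj
  have hcard : Fintype.card Abar.V
      ≤ Fintype.card (Quotient (Stmt11Aux.gst Abar g N hN hNv)) := by
    have h1 : Cardinal.mk Abar.V
        ≤ Cardinal.mk (Quotient (Stmt11Aux.gst Abar g N hN hNv)) := hle
    rwa [Cardinal.mk_fintype, Cardinal.mk_fintype, Nat.cast_le] at h1
  omega
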